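/- For every integer r ≥ 2 and every integer n with n ≥ 2r + 2·log₂ r + log₂ log₂ r + 15, one has g(n, r) = n − 3; that is, there exists an r-multiplicity antichain F ⊆ 2^[n] with |S(F)| = n − 3, and no r-multiplicity antichain achieves more. -/
import Mathlib


namespace Stmt12
open Finset

def Qblock (r u : ℕ) : Finset ℕ := Finset.Ico (r+3) (r+2*u+3)

lemma card_Qblock (r u : ℕ) : (Qblock r u).card = 2*u := by
  simp [Qblock, Nat.card_Ico]

noncomputable def TT (r u i : ℕ) : Finset ℕ :=
  ((Qblock r u).powersetCard u).toList.getD i ∅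

lemma TT_mem {r u i : ℕ} (hi : i < Nat.centralBinom u) :
    TT r u i ∈ (Qblock r u).powersetCard u := by
  have hlen : ((Qblock r u).powersetCard u).toList.length = Nat.centralBinom u := by
    rw [Finset.length_toList, Finset.card_powersetCard, card_Qblock, Nat.centralBinom]
  rw [TT, List.getD_eq_getElem _ _ (by omega)]
  rw [← Finset.mem_toList]
  exact List.getElem_mem _

lemma TT_subset {r u i : ℕ} (hi : i < Nat.centralBinom u) :
    TT r u i ⊆ Finset.Ico (r+3) (r+2*u+3) :=
  (Finset.mem_powersetCard.1 (TT_mem hi)).1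

lemma TT_card {r u i : ℕ} (hi : i < Nat.centralBinom u) :
    (TT r u i).card = u :=
  (Finset.mem_powersetCard.1 (TT_mem hi)).2

lemma TT_injOn {r u i j : ℕ} (hi : i < Nat.centralBinom u)
    (hj : j < Nat.centralBinom u) (hne : i ≠ j) : TT r u i ≠ TT r u j := by
  have hlen : ((Qblock r u).powersetCard u).toList.length = Nat.centralBinom u := by
    rw [Finset.length_toList, Finset.card_powersetCard, card_Qblock, Nat.centralBinom]
  have hnd := Finset.nodup_toList ((Qblock r u).powersetCard u)
  rw [TT, TT, List.getD_eq_getElem _ _ (by omega), List.getD_eq_getElem _ _ (by omega)]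
  intro h
  have := hnd.get_inj_iff (i := ⟨i, by omega⟩) (j := ⟨j, by omega⟩)
  simp only [List.get_eq_getElem] at this
  exact hne (by simpa using this.1 h)

def v0 (r u : ℕ) : ℕ := r + 2*u + 3

noncomputable def AA (r u Γ s j : ℕ) : Finset ℕ :=
  if s = 2 then {0, j+1}
  else if s = 3 then {0, r+1, v0 r u + j}
  else if s ≤ u+1 then {0, r+2, v0 r u + j} ∪ Finset.Ico (r+s-1) (r+2*s-4)
  else insert 0 ((Finset.Ico (v0 r u + (s-u-2)/Γ) (v0 r u + (s-u-2)/Γ + (s-1-u))) ∪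
      TT r u (((s-u-2) % Γ)*r + j))

section Main

variable {r n u Γ : ℕ}

lemma AA_two (r u Γ j : ℕ) : AA r u Γ 2 j = {0, j+1} := by simp [AA]

lemma AA_three (r u Γ j : ℕ) : AA r u Γ 3 j = {0, r+1, v0 r u + j} := by
  rw [AA, if_neg (by norm_num), if_pos rfl]

lemma AA_small {s : ℕ} (h4 : 4 ≤ s) (hsu : s ≤ u+1) (j : ℕ) :
    AA r u Γ s j = {0, r+2, v0 r u + j} ∪ Finset.Ico (r+s-1) (r+2*s-4) := by
  have h1 : s ≠ 2 := by omega
  have h2 : s ≠ 3 := by omega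
  rw [AA, if_neg h1, if_neg h2, if_pos hsu]

lemma AA_mid {s : ℕ} (hu : 2 ≤ u) (hs : u+2 ≤ s) (j : ℕ) :
    AA r u Γ s j = insert 0 ((Finset.Ico (v0 r u + (s-u-2)/Γ)
      (v0 r u + (s-u-2)/Γ + (s-1-u))) ∪ TT r u (((s-u-2) % Γ)*r + j)) := by
  have h1 : s ≠ 2 := by omega
  have h2 : s ≠ 3 := by omega
  have h3 : ¬ (s ≤ u+1) := by omega
  rw [AA, if_neg h1, if_neg h2, if_neg h3]

lemma Gamma_ge (hr : 2 ≤ r) (hCB : r*r ≤ Nat.centralBinom u)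
    (hΓ : Γ = Nat.centralBinom u / r) : r ≤ Γ := by
  rw [hΓ, Nat.le_div_iff_mul_le (by omega)]
  exact hCB

lemma mid_idx_lt (hr : 2 ≤ r) (hCB : r*r ≤ Nat.centralBinom u)
    (hΓ : Γ = Nat.centralBinom u / r) {e j : ℕ} (hj : j < r) :
    (e % Γ)*r + j < Nat.centralBinom u := by
  have hΓ2 : r ≤ Γ := Gamma_ge hr hCB hΓ
  have h1 : Γ * r ≤ Nat.centralBinom u := by
    rw [hΓ]; exact Nat.div_mul_le_self _ _
  have h2 : e % Γ < Γ := Nat.mod_lt _ (by omega)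
  have h3 : (e % Γ + 1) * r ≤ Γ * r := Nat.mul_le_mul_right r (by omega)
  have h4 : (e % Γ + 1) * r = (e % Γ) * r + r := by ring
  omega

lemma mid_div_bound (hr : 2 ≤ r) (hCB : r*r ≤ Nat.centralBinom u)
    (hΓ : Γ = Nat.centralBinom u / r) (hσ : r + u + 4 ≤ (n+1)/2)
    {s : ℕ} (hsM : s ≤ n/2) :
    (s-u-2)/Γ + r + u + 2 ≤ (n+1)/2 := by
  have hΓ2 : r ≤ Γ := Gamma_ge hr hCB hΓ
  obtain ⟨σ', hσ'⟩ : ∃ σ', (n+1)/2 = r + u + 4 + σ' := ⟨(n+1)/2 - (r+u+4), by omega⟩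
  have key : s - u - 2 < (σ' + 3) * Γ := by
    have h2 : (σ' + 3) * r ≤ (σ' + 3) * Γ := Nat.mul_le_mul_left _ hΓ2
    obtain ⟨r', hr'⟩ : ∃ r', r = 2 + r' := ⟨r - 2, by omega⟩
    have h3 : (σ' + 3) * r = σ' * r' + 2*σ' + 3*r' + 6 := by subst hr'; ring
    have h4 : 0 ≤ σ' * r' := Nat.zero_le _
    omega
  have := (Nat.div_lt_iff_lt_mul (show 0 < Γ by omega)).2 key
  omega

lemma mid_fit (hr : 2 ≤ r) (hCB : r*r ≤ Nat.centralBinom u)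
    (hΓ : Γ = Nat.centralBinom u / r) (hσ : r + u + 4 ≤ (n+1)/2)
    {s : ℕ} (hsM : s ≤ n/2) :
    v0 r u + (s-u-2)/Γ + (s-1-u) ≤ n := by
  have := mid_div_bound (n := n) hr hCB hΓ hσ hsM
  rw [v0]
  set q := (s-u-2)/Γ with hq
  clear_value q
  omega

lemma mem_TT_bounds {i x : ℕ} (hi : i < Nat.centralBinom u) (hx : x ∈ TT r u i) :
    r+3 ≤ x ∧ x < r+2*u+3 := by
  have := TT_subset hi hx
  simpa [Finset.mem_Ico] using this

lemma card_AA (hr : 2 ≤ r) (hu : 5 ≤ u) (hCB : r*r ≤ Nat.centralBinom u)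
    (hΓ : Γ = Nat.centralBinom u / r)
    {s j : ℕ} (hs : 2 ≤ s) (hj : j < r) :
    (AA r u Γ s j).card = s := by
  rcases Nat.lt_or_ge s 4 with h4 | h4
  · interval_cases s
    · rw [AA_two]
      rw [Finset.card_insert_of_notMem (by simp), Finset.card_singleton]
    · rw [AA_three]
      rw [Finset.card_insert_of_notMem (by simp [v0]; omega),
        Finset.card_insert_of_notMem (by simp [v0]; omega), Finset.card_singleton]
  rcases Nat.lt_or_ge (u+1) s with hmid | hsmall
  · -- mid case
    have hidx := mid_idx_lt (u := u) hr hCB hΓ (e := s-u-2) hj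
    rw [AA_mid (by omega) (by omega)]
    have hTb : ∀ x ∈ TT r u (((s-u-2) % Γ)*r + j), r+3 ≤ x ∧ x < r+2*u+3 :=
      fun x hx => mem_TT_bounds hidx hx
    rw [Finset.card_insert_of_notMem (by
      simp only [Finset.mem_union, Finset.mem_Ico, v0]
      push_neg
      set q := (s-u-2)/Γ with hq
      clear_value q
      exact ⟨fun h => by omega, fun h => absurd (hTb 0 h).1 (by omega)⟩)]
    rw [Finset.card_union_of_disjoint (by
      rw [Finset.disjoint_right]
      intro x hx
      have := hTb x hx
      simp only [Finset.mem_Ico, v0]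
      set q := (s-u-2)/Γ with hq
      clear_value q
      omega)]
    rw [Nat.card_Ico, TT_card hidx]
    set q := (s-u-2)/Γ with hq
    clear_value q
    omega
  · -- small case
    rw [AA_small h4 hsmall]
    rw [Finset.card_union_of_disjoint (by
      rw [Finset.disjoint_left]
      intro x hx
      simp only [Finset.mem_insert, Finset.mem_singleton, v0] at hx
      simp only [Finset.mem_Ico]
      omega)]
    rw [Nat.card_Ico]
    rw [Finset.card_insert_of_notMem (by simp [v0]; omega),
      Finset.card_insert_of_notMem (by simp [v0]; omega), Finset.card_singleton]
    omega

lemma zero_mem_AA (s j : ℕ) : 0 ∈ AA r u Γ s j := by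
  rw [AA]
  split_ifs <;> simp

lemma AA_subset_range (hr : 2 ≤ r) (hu : 5 ≤ u) (hCB : r*r ≤ Nat.centralBinom u)
    (hΓ : Γ = Nat.centralBinom u / r) (hσ : r + u + 4 ≤ (n+1)/2)
    (hn2 : 2*r + 2*u + 3 ≤ n)
    {s j : ℕ} (hs : 2 ≤ s) (hsM : s ≤ n/2) (hj : j < r) :
    AA r u Γ s j ⊆ Finset.range n := by
  have hv : v0 r u + j < n := by rw [v0]; omega
  intro x hx
  rw [Finset.mem_range]
  rcases Nat.lt_or_ge s 4 with h4 | h4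
  · interval_cases s
    · rw [AA_two] at hx
      simp only [Finset.mem_insert, Finset.mem_singleton] at hx
      omega
    · rw [AA_three] at hx
      simp only [Finset.mem_insert, Finset.mem_singleton] at hx
      rcases hx with h | h | h <;> omega
  rcases Nat.lt_or_ge (u+1) s with hmid | hsmall
  · have hidx := mid_idx_lt (u := u) hr hCB hΓ (e := s-u-2) hj
    have hfit := mid_fit (n := n) hr hCB hΓ hσ hsM
    rw [AA_mid (by omega) (by omega)] at hx
    simp only [Finset.mem_insert, Finset.mem_union, Finset.mem_Ico] at hx
    rcases hx with h | h | h
    · omega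
    · rw [v0] at hfit
      revert h hfit
      rw [v0]
      set q := (s-u-2)/Γ with hq
      clear_value q
      intro h hfit
      omega
    · have := mem_TT_bounds hidx h
      omega
  · rw [AA_small h4 hsmall] at hx
    simp only [Finset.mem_insert, Finset.mem_union, Finset.mem_singleton,
      Finset.mem_Ico] at hx
    rcases hx with (h | h | h) | h <;> omega

end Main
end Stmt12

namespace More
open Finset Stmt12

lemma index_ne {d1 d2 j k r : ℕ} (hj : j < r) (hk : k < r) (h : d1 ≠ d2) :
    d1*r+j ≠ d2*r+k := by
  rcases Nat.lt_or_ge d1 d2 with hlt | hge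
  · have h1 : (d1+1)*r ≤ d2*r := Nat.mul_le_mul_right r (by omega)
    have h2 : (d1+1)*r = d1*r + r := by ring
    omega
  · have hlt : d2 < d1 := by omega
    have h1 : (d2+1)*r ≤ d1*r := Nat.mul_le_mul_right r (by omega)
    have h2 : (d2+1)*r = d2*r + r := by ring
    omega

variable {r n u Γ : ℕ}

lemma AA_not_subset (hr : 2 ≤ r) (hu : 5 ≤ u) (hCB : r*r ≤ Nat.centralBinom u)
    (hΓ : Γ = Nat.centralBinom u / r)
    {s t j k : ℕ} (hs : 2 ≤ s) (ht : 2 ≤ t) (hj : j < r) (hk : k < r)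
    (hne : ¬(s = t ∧ j = k)) : ¬ AA r u Γ s j ⊆ AA r u Γ t k := by
  intro hsub
  have hcs := card_AA (Γ := Γ) hr hu hCB hΓ hs hj
  have hct := card_AA (Γ := Γ) hr hu hCB hΓ ht hk
  have hst : s ≤ t := by
    have := Finset.card_le_card hsub
    omega
  have hclass_s : s = 2 ∨ s = 3 ∨ (4 ≤ s ∧ s ≤ u+1) ∨ u+2 ≤ s := by omega
  have hclass_t : t = 2 ∨ t = 3 ∨ (4 ≤ t ∧ t ≤ u+1) ∨ u+2 ≤ t := by omega
  rcases hclass_s with rfl | rfl | ⟨hs4, hsu⟩ | hsmid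
  · -- s = 2 : witness j+1
    have hw : (j+1) ∈ AA r u Γ t k := hsub (by rw [AA_two]; simp)
    rcases hclass_t with rfl | rfl | ⟨ht4, htu⟩ | htmid
    · rw [AA_two] at hw
      simp only [Finset.mem_insert, Finset.mem_singleton] at hw
      omega
    · rw [AA_three] at hw
      simp only [Finset.mem_insert, Finset.mem_singleton, v0] at hw
      omega
    · rw [AA_small ht4 htu] at hw
      simp only [Finset.mem_union, Finset.mem_insert, Finset.mem_singleton,
        Finset.mem_Ico, v0] at hw
      omega
    · have hidx := mid_idx_lt (u := u) hr hCB hΓ (e := t-u-2) hk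
      rw [AA_mid (by omega) (by omega)] at hw
      simp only [Finset.mem_insert, Finset.mem_union, Finset.mem_Ico, v0] at hw
      rcases hw with h | h | h
      · omega
      · set q := (t-u-2)/Γ with hq; clear_value q; omega
      · have := mem_TT_bounds hidx h; omega
  · -- s = 3
    rcases hclass_t with rfl | rfl | ⟨ht4, htu⟩ | htmid
    · omega
    · -- t = 3 : witness v0 + j
      have hw : v0 r u + j ∈ AA r u Γ 3 k := hsub (by rw [AA_three]; simp)
      rw [AA_three] at hw
      simp only [Finset.mem_insert, Finset.mem_singleton, v0] at hw
      omega
    · -- witness r+1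
      have hw : r + 1 ∈ AA r u Γ t k := hsub (by rw [AA_three]; simp)
      rw [AA_small ht4 htu] at hw
      simp only [Finset.mem_union, Finset.mem_insert, Finset.mem_singleton,
        Finset.mem_Ico, v0] at hw
      omega
    · have hw : r + 1 ∈ AA r u Γ t k := hsub (by rw [AA_three]; simp)
      have hidx := mid_idx_lt (u := u) hr hCB hΓ (e := t-u-2) hk
      rw [AA_mid (by omega) (by omega)] at hw
      simp only [Finset.mem_insert, Finset.mem_union, Finset.mem_Ico, v0] at hw
      rcases hw with h | h | h
      · omega
      · set q := (t-u-2)/Γ with hq; clear_value q; omega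
      · have := mem_TT_bounds hidx h; omega
  · -- s small
    rcases hclass_t with rfl | rfl | ⟨ht4, htu⟩ | htmid
    · omega
    · omega
    · rcases Nat.eq_or_lt_of_le hst with rfl | hstlt
      · -- same level : witness v0 + j
        have hw : v0 r u + j ∈ AA r u Γ s k :=
          hsub (by rw [AA_small hs4 hsu]; simp)
        rw [AA_small ht4 htu] at hw
        simp only [Finset.mem_union, Finset.mem_insert, Finset.mem_singleton,
          Finset.mem_Ico, v0] at hw
        omega
      · -- s < t : witness r+s-1
        have hw : r + s - 1 ∈ AA r u Γ t k := by
          apply hsub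
          rw [AA_small hs4 hsu]
          simp only [Finset.mem_union, Finset.mem_Ico]
          right
          omega
        rw [AA_small ht4 htu] at hw
        simp only [Finset.mem_union, Finset.mem_insert, Finset.mem_singleton,
          Finset.mem_Ico, v0] at hw
        omega
    · -- t mid : witness r+2
      have hw : r + 2 ∈ AA r u Γ t k := by
        apply hsub
        rw [AA_small hs4 hsu]
        simp
      have hidx := mid_idx_lt (u := u) hr hCB hΓ (e := t-u-2) hk
      rw [AA_mid (by omega) (by omega)] at hw
      simp only [Finset.mem_insert, Finset.mem_union, Finset.mem_Ico, v0] at hw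
      rcases hw with h | h | h
      · omega
      · set q := (t-u-2)/Γ with hq; clear_value q; omega
      · have := mem_TT_bounds hidx h; omega
  · -- s mid
    have htmid : u + 2 ≤ t := by omega
    have hidxs := mid_idx_lt (u := u) hr hCB hΓ (e := s-u-2) hj
    have hidxt := mid_idx_lt (u := u) hr hCB hΓ (e := t-u-2) hk
    have hg : (s-u-2)/Γ ≤ (t-u-2)/Γ := Nat.div_le_div_right (by omega)
    rcases Nat.eq_or_lt_of_le hg with hgeq | hglt
    · -- same group : distinct T parts
      have hii : ((s-u-2) % Γ)*r + j ≠ ((t-u-2) % Γ)*r + k := by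
        rcases Nat.eq_or_lt_of_le hst with rfl | hstlt
        · have hjk : j ≠ k := fun h => hne ⟨rfl, h⟩
          omega
        · apply index_ne hj hk
          have h1 := Nat.div_add_mod (s-u-2) Γ
          have h2 := Nat.div_add_mod (t-u-2) Γ
          rw [← hgeq] at h2
          set P := Γ * ((s-u-2)/Γ) with hP
          clear_value P
          omega
      have hTne := TT_injOn (r := r) hidxs hidxt hii
      have hTcs := TT_card (r := r) hidxs
      have hTct := TT_card (r := r) hidxt
      have hnsub : ¬ TT r u (((s-u-2) % Γ)*r + j) ⊆ TT r u (((t-u-2) % Γ)*r + k) :=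
        fun hsub' => hTne (Finset.eq_of_subset_of_card_le hsub' (by omega))
      obtain ⟨w, hw1, hw2⟩ := Finset.not_subset.1 hnsub
      have hwb := mem_TT_bounds hidxs hw1
      have hwA : w ∈ AA r u Γ s j := by
        rw [AA_mid (by omega) (by omega)]
        simp only [Finset.mem_insert, Finset.mem_union]
        right; right; exact hw1
      have hw := hsub hwA
      rw [AA_mid (by omega) (by omega)] at hw
      simp only [Finset.mem_insert, Finset.mem_union, Finset.mem_Ico, v0] at hw
      rcases hw with h | h | h
      · omega
      · set q := (t-u-2)/Γ with hq; clear_value q; omega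
      · exact hw2 h
    · -- different groups : witness the left endpoint of the s-interval
      have hwA : v0 r u + (s-u-2)/Γ ∈ AA r u Γ s j := by
        rw [AA_mid (by omega) (by omega)]
        simp only [Finset.mem_insert, Finset.mem_union, Finset.mem_Ico]
        right; left
        constructor
        · exact le_refl _
        · omega
      have hw := hsub hwA
      rw [AA_mid (by omega) (by omega)] at hw
      simp only [Finset.mem_insert, Finset.mem_union, Finset.mem_Ico, v0] at hw
      rcases hw with h | h | h
      · set q := (s-u-2)/Γ with hq; clear_value q; omega
      · revert h hglt
        set q := (s-u-2)/Γ with hq; clear_value q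
        set q2 := (t-u-2)/Γ with hq2; clear_value q2
        intro h hglt
        omega
      · have := mem_TT_bounds hidxt h
        revert this
        set q := (s-u-2)/Γ with hq; clear_value q
        intro this
        omega

end More

namespace Fam
open Finset Stmt12 More

noncomputable def Glow (r n u Γ : ℕ) : Finset (Finset ℕ) :=
  (Finset.Icc 2 (n/2)).biUnion (fun s => (Finset.range r).image (AA r u Γ s))

noncomputable def Fnat (r n u Γ : ℕ) : Finset (Finset ℕ) :=
  Glow r n u Γ ∪ (Glow r n u Γ).image (fun A => Finset.range n \ A)

variable {r n u Γ : ℕ}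

lemma mem_Glow {A : Finset ℕ} :
    A ∈ Glow r n u Γ ↔ ∃ s, (2 ≤ s ∧ s ≤ n/2) ∧ ∃ j < r, AA r u Γ s j = A := by
  simp [Glow, Finset.mem_biUnion, Finset.mem_Icc, Finset.mem_image, Finset.mem_range]

section WithHyps

variable (hr : 2 ≤ r) (hu : 5 ≤ u) (hCB : r*r ≤ Nat.centralBinom u)
  (hΓ : Γ = Nat.centralBinom u / r) (hσ : r + u + 4 ≤ (n+1)/2)
  (hn2 : 2*r + 2*u + 3 ≤ n)

include hr hu hCB hΓ

lemma Glow_mem_facts {A : Finset ℕ} (hA : A ∈ Glow r n u Γ) :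
    0 ∈ A ∧ 2 ≤ A.card ∧ A.card ≤ n/2 := by
  obtain ⟨s, ⟨hs2, hsM⟩, j, hj, rfl⟩ := mem_Glow.1 hA
  refine ⟨zero_mem_AA s j, ?_, ?_⟩ <;>
    rw [card_AA (Γ := Γ) hr hu hCB hΓ hs2 hj] <;> omega

include hσ hn2 in
lemma Glow_subset_range {A : Finset ℕ} (hA : A ∈ Glow r n u Γ) :
    A ⊆ Finset.range n := by
  obtain ⟨s, ⟨hs2, hsM⟩, j, hj, rfl⟩ := mem_Glow.1 hA
  exact AA_subset_range hr hu hCB hΓ hσ hn2 hs2 hsM hj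

lemma Glow_antichain {A B : Finset ℕ} (hA : A ∈ Glow r n u Γ)
    (hB : B ∈ Glow r n u Γ) (hne : A ≠ B) : ¬ A ⊆ B := by
  obtain ⟨s, ⟨hs2, hsM⟩, j, hj, rfl⟩ := mem_Glow.1 hA
  obtain ⟨t, ⟨ht2, htM⟩, k, hk, rfl⟩ := mem_Glow.1 hB
  apply AA_not_subset hr hu hCB hΓ hs2 ht2 hj hk
  rintro ⟨rfl, rfl⟩
  exact hne rfl

lemma Glow_level {s : ℕ} (hs2 : 2 ≤ s) (hsM : s ≤ n/2) :
    r ≤ ((Glow r n u Γ).filter (fun A => A.card = s)).card := by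
  have hsubset : (Finset.range r).image (AA r u Γ s) ⊆
      (Glow r n u Γ).filter (fun A => A.card = s) := by
    intro A hA
    obtain ⟨j, hj, rfl⟩ := Finset.mem_image.1 hA
    rw [Finset.mem_range] at hj
    rw [Finset.mem_filter]
    exact ⟨mem_Glow.2 ⟨s, ⟨hs2, hsM⟩, j, hj, rfl⟩,
      card_AA (Γ := Γ) hr hu hCB hΓ hs2 hj⟩
  have hinj : Set.InjOn (AA r u Γ s) (Finset.range r) := by
    intro j hj k hk hjk
    by_contra hne
    simp only [Finset.coe_range, Set.mem_Iio] at hj hk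
    exact AA_not_subset hr hu hCB hΓ hs2 hs2 hj hk
      (fun h => hne h.2) hjk.le
  calc r = ((Finset.range r).image (AA r u Γ s)).card := by
        rw [Finset.card_image_of_injOn hinj, Finset.card_range]
  _ ≤ _ := Finset.card_le_card hsubset

lemma Glow_image_card (hM2 : 2 ≤ n/2) :
    (Glow r n u Γ).image Finset.card = Finset.Icc 2 (n/2) := by
  apply Finset.Subset.antisymm
  · intro t ht
    obtain ⟨A, hA, rfl⟩ := Finset.mem_image.1 ht
    have := Glow_mem_facts hr hu hCB hΓ hA
    rw [Finset.mem_Icc]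
    exact ⟨this.2.1, this.2.2⟩
  · intro t ht
    rw [Finset.mem_Icc] at ht
    apply Finset.mem_image.2
    exact ⟨AA r u Γ t 0, mem_Glow.2 ⟨t, ⟨ht.1, ht.2⟩, 0, by omega, rfl⟩,
      card_AA (Γ := Γ) hr hu hCB hΓ ht.1 (by omega)⟩

include hσ hn2 in
lemma Fnat_subset_range {A : Finset ℕ} (hA : A ∈ Fnat r n u Γ) :
    A ⊆ Finset.range n := by
  rcases Finset.mem_union.1 hA with h | h
  · exact Glow_subset_range hr hu hCB hΓ hσ hn2 h
  · obtain ⟨B, hB, rfl⟩ := Finset.mem_image.1 h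
    exact Finset.sdiff_subset

include hσ hn2 in
lemma Fnat_antichain {A B : Finset ℕ} (hA : A ∈ Fnat r n u Γ)
    (hB : B ∈ Fnat r n u Γ) (hne : A ≠ B) : ¬ A ⊆ B := by
  rcases Finset.mem_union.1 hA with h1 | h1 <;> rcases Finset.mem_union.1 hB with h2 | h2
  · exact Glow_antichain hr hu hCB hΓ h1 h2 hne
  · -- A low, B a complement : 0 ∈ A but 0 ∉ B
    obtain ⟨C, hC, rfl⟩ := Finset.mem_image.1 h2
    intro hsub
    have h0A : 0 ∈ A := (Glow_mem_facts hr hu hCB hΓ h1).1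
    have h0C : 0 ∈ C := (Glow_mem_facts hr hu hCB hΓ hC).1
    have := hsub h0A
    rw [Finset.mem_sdiff] at this
    exact this.2 h0C
  · -- A a complement, B low : cardinality
    obtain ⟨C, hC, rfl⟩ := Finset.mem_image.1 h1
    intro hsub
    have hfC := Glow_mem_facts hr hu hCB hΓ hC
    have hfB := Glow_mem_facts hr hu hCB hΓ h2
    have hCr := Glow_subset_range hr hu hCB hΓ hσ hn2 hC
    have hcard : (Finset.range n \ C).card = n - C.card := by
      rw [Finset.card_sdiff_of_subset hCr, Finset.card_range]
    have hBle : B.card ≤ (Finset.range n \ C).card := by omega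
    have heq := Finset.eq_of_subset_of_card_le hsub hBle
    have h0B : 0 ∈ B := hfB.1
    rw [← heq, Finset.mem_sdiff] at h0B
    exact h0B.2 hfC.1
  · -- both complements
    obtain ⟨C, hC, rfl⟩ := Finset.mem_image.1 h1
    obtain ⟨D, hD, rfl⟩ := Finset.mem_image.1 h2
    intro hsub
    have hDr := Glow_subset_range hr hu hCB hΓ hσ hn2 hD
    have hsub' : D ⊆ C := by
      intro x hx
      by_contra hxC
      have hxr : x ∈ Finset.range n := hDr hx
      have : x ∈ Finset.range n \ C := Finset.mem_sdiff.2 ⟨hxr, hxC⟩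
      have := hsub this
      rw [Finset.mem_sdiff] at this
      exact this.2 hx
    have hDC : D ≠ C := by
      rintro rfl
      exact hne rfl
    exact Glow_antichain hr hu hCB hΓ hD hC hDC hsub'

include hσ hn2 in
lemma Fnat_level {t : ℕ} (h2 : 2 ≤ t) (ht : t ≤ n-2) (hn4 : 4 ≤ n) :
    r ≤ ((Fnat r n u Γ).filter (fun A => A.card = t)).card := by
  rcases le_or_gt t (n/2) with hth | hth
  · calc r ≤ ((Glow r n u Γ).filter (fun A => A.card = t)).card :=
        Glow_level hr hu hCB hΓ h2 hth
    _ ≤ _ := Finset.card_le_card (Finset.filter_subset_filter _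
        Finset.subset_union_left)
  · set s := n - t with hsdef
    have hs2 : 2 ≤ s := by omega
    have hsM : s ≤ n/2 := by omega
    have himg : ((Glow r n u Γ).filter (fun A => A.card = s)).image
        (fun A => Finset.range n \ A) ⊆
        (Fnat r n u Γ).filter (fun A => A.card = t) := by
      intro B hB
      obtain ⟨A, hA, rfl⟩ := Finset.mem_image.1 hB
      rw [Finset.mem_filter] at hA
      rw [Finset.mem_filter]
      constructor
      · exact Finset.mem_union.2 (Or.inr (Finset.mem_image_of_mem _ hA.1))
      · rw [Finset.card_sdiff_of_subset (Glow_subset_range hr hu hCB hΓ hσ hn2 hA.1),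
          Finset.card_range, hA.2]
        omega
    have hinj : Set.InjOn (fun A => Finset.range n \ A)
        (((Glow r n u Γ).filter (fun A => A.card = s)) : Set (Finset ℕ)) := by
      intro A hA B hB hAB
      simp only [Finset.coe_filter, Set.mem_setOf_eq] at hA hB
      have hAr := Glow_subset_range hr hu hCB hΓ hσ hn2 hA.1
      have hBr := Glow_subset_range hr hu hCB hΓ hσ hn2 hB.1
      have : Finset.range n \ (Finset.range n \ A) =
          Finset.range n \ (Finset.range n \ B) := by
        simp only at hAB
        rw [hAB]
      rwa [Finset.sdiff_sdiff_eq_self hAr, Finset.sdiff_sdiff_eq_self hBr] at this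
    calc r ≤ ((Glow r n u Γ).filter (fun A => A.card = s)).card :=
        Glow_level hr hu hCB hΓ hs2 hsM
    _ = (((Glow r n u Γ).filter (fun A => A.card = s)).image
        (fun A => Finset.range n \ A)).card :=
        (Finset.card_image_of_injOn hinj).symm
    _ ≤ _ := Finset.card_le_card himg

include hσ hn2 in
lemma Fnat_image_card (hn4 : 4 ≤ n) :
    (Fnat r n u Γ).image Finset.card = Finset.Icc 2 (n-2) := by
  have hM2 : 2 ≤ n/2 := by omega
  apply Finset.Subset.antisymm
  · intro t ht
    obtain ⟨A, hA, rfl⟩ := Finset.mem_image.1 ht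
    rw [Finset.mem_Icc]
    rcases Finset.mem_union.1 hA with h | h
    · have := Glow_mem_facts hr hu hCB hΓ h
      omega
    · obtain ⟨C, hC, rfl⟩ := Finset.mem_image.1 h
      have hf := Glow_mem_facts hr hu hCB hΓ hC
      rw [Finset.card_sdiff_of_subset (Glow_subset_range hr hu hCB hΓ hσ hn2 hC),
        Finset.card_range]
      omega
  · intro t ht
    rw [Finset.mem_Icc] at ht
    rcases le_or_gt t (n/2) with hth | hth
    · apply Finset.mem_image.2
      refine ⟨AA r u Γ t 0, Finset.mem_union.2 (Or.inl
        (mem_Glow.2 ⟨t, ⟨ht.1, hth⟩, 0, by omega, rfl⟩)), ?_⟩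
      exact card_AA (Γ := Γ) hr hu hCB hΓ ht.1 (by omega)
    · set s := n - t with hsdef
      have hs2 : 2 ≤ s := by omega
      have hsM : s ≤ n/2 := by omega
      have hmem : AA r u Γ s 0 ∈ Glow r n u Γ :=
        mem_Glow.2 ⟨s, ⟨hs2, hsM⟩, 0, by omega, rfl⟩
      apply Finset.mem_image.2
      refine ⟨Finset.range n \ AA r u Γ s 0, Finset.mem_union.2 (Or.inr
        (Finset.mem_image_of_mem _ hmem)), ?_⟩
      rw [Finset.card_sdiff_of_subset (Glow_subset_range hr hu hCB hΓ hσ hn2 hmem),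
        Finset.card_range, card_AA (Γ := Γ) hr hu hCB hΓ hs2 (by omega)]
      omega

end WithHyps
end Fam

namespace Glue
open Finset Stmt12 More Fam

def castSet (n : ℕ) (A : Finset ℕ) : Finset (Fin n) :=
  (A.filter (· < n)).attachFin (fun m hm => (Finset.mem_filter.1 hm).2)

lemma mem_castSet {n : ℕ} {A : Finset ℕ} {x : Fin n} :
    x ∈ castSet n A ↔ (x : ℕ) ∈ A := by
  simp [castSet, Finset.mem_attachFin, x.isLt]

lemma castSet_card {n : ℕ} {A : Finset ℕ} (h : A ⊆ Finset.range n) :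
    (castSet n A).card = A.card := by
  rw [castSet, Finset.card_attachFin]
  congr 1
  apply Finset.filter_true_of_mem
  intro x hx
  simpa using h hx

lemma castSet_subset_iff {n : ℕ} {A B : Finset ℕ} (hA : A ⊆ Finset.range n) :
    castSet n A ⊆ castSet n B ↔ A ⊆ B := by
  constructor
  · intro h a ha
    have han : a < n := by simpa using hA ha
    have : (⟨a, han⟩ : Fin n) ∈ castSet n A := mem_castSet.2 ha
    exact mem_castSet.1 (h this)
  · intro h x hx
    exact mem_castSet.2 (h (mem_castSet.1 hx))

lemma castSet_inj {n : ℕ} {A B : Finset ℕ} (hA : A ⊆ Finset.range n)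
    (hB : B ⊆ Finset.range n) (h : castSet n A = castSet n B) : A = B :=
  Finset.Subset.antisymm ((castSet_subset_iff hA).1 h.le)
    ((castSet_subset_iff hB).1 h.ge)

variable {r n u Γ : ℕ}

theorem exists_F (hr : 2 ≤ r) (hu : 5 ≤ u) (hCB : r*r ≤ Nat.centralBinom u)
    (hΓ : Γ = Nat.centralBinom u / r) (hσ : r + u + 4 ≤ (n+1)/2)
    (hn2 : 2*r + 2*u + 3 ≤ n) (hn4 : 4 ≤ n) :
    ∃ F : Finset (Finset (Fin n)),
      (∀ A ∈ F, ∀ B ∈ F, A ≠ B → ¬ A ⊆ B) ∧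
      (∀ t ∈ F.image Finset.card, r ≤ (F.filter (fun A => A.card = t)).card) ∧
      (F.image Finset.card).card = n - 3 := by
  refine ⟨(Fnat r n u Γ).image (castSet n), ?_, ?_, ?_⟩
  · -- antichain
    intro A' hA' B' hB' hne hsub
    obtain ⟨A, hA, rfl⟩ := Finset.mem_image.1 hA'
    obtain ⟨B, hB, rfl⟩ := Finset.mem_image.1 hB'
    have hAr := Fnat_subset_range hr hu hCB hΓ hσ hn2 hA
    have hAB : A ≠ B := by rintro rfl; exact hne rfl
    exact Fnat_antichain hr hu hCB hΓ hσ hn2 hA hB hAB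
      ((castSet_subset_iff hAr).1 hsub)
  · -- multiplicities
    intro t ht
    obtain ⟨A', hA', hcA'⟩ := Finset.mem_image.1 ht
    obtain ⟨A, hA, rfl⟩ := Finset.mem_image.1 hA'
    have hAr := Fnat_subset_range hr hu hCB hΓ hσ hn2 hA
    have htIcc : 2 ≤ t ∧ t ≤ n - 2 := by
      have : A.card ∈ (Fnat r n u Γ).image Finset.card :=
        Finset.mem_image_of_mem _ hA
      rw [Fnat_image_card hr hu hCB hΓ hσ hn2 hn4, Finset.mem_Icc] at this
      rw [castSet_card hAr] at hcA'
      omega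
    have hsubset : ((Fnat r n u Γ).filter (fun B => B.card = t)).image (castSet n)
        ⊆ ((Fnat r n u Γ).image (castSet n)).filter (fun B => B.card = t) := by
      intro B' hB'
      obtain ⟨B, hB, rfl⟩ := Finset.mem_image.1 hB'
      rw [Finset.mem_filter] at hB
      rw [Finset.mem_filter]
      refine ⟨Finset.mem_image_of_mem _ hB.1, ?_⟩
      rw [castSet_card (Fnat_subset_range hr hu hCB hΓ hσ hn2 hB.1), hB.2]
    have hinj : Set.InjOn (castSet n)
        (((Fnat r n u Γ).filter (fun B => B.card = t)) : Set (Finset ℕ)) := by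
      intro B1 h1 B2 h2 h12
      simp only [Finset.coe_filter, Set.mem_setOf_eq] at h1 h2
      exact castSet_inj (Fnat_subset_range hr hu hCB hΓ hσ hn2 h1.1)
        (Fnat_subset_range hr hu hCB hΓ hσ hn2 h2.1) h12
    calc r ≤ ((Fnat r n u Γ).filter (fun B => B.card = t)).card :=
        Fnat_level hr hu hCB hΓ hσ hn2 htIcc.1 htIcc.2 hn4
    _ = (((Fnat r n u Γ).filter (fun B => B.card = t)).image (castSet n)).card :=
        (Finset.card_image_of_injOn hinj).symm
    _ ≤ _ := Finset.card_le_card hsubset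
  · -- number of sizes
    have himg : ((Fnat r n u Γ).image (castSet n)).image Finset.card
        = (Fnat r n u Γ).image Finset.card := by
      rw [Finset.image_image]
      apply Finset.image_congr
      intro A hA
      exact castSet_card (Fnat_subset_range hr hu hCB hΓ hσ hn2 hA)
    rw [himg, Fnat_image_card hr hu hCB hΓ hσ hn2 hn4, Nat.card_Icc]
    omega

end Glue

namespace Upper
open Finset

variable {n r : ℕ}

lemma two_at (F : Finset (Finset (Fin n))) (hr : 2 ≤ r)
    (hmult : ∀ t ∈ F.image Finset.card, r ≤ (F.filter (fun A => A.card = t)).card)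
    {t : ℕ} (ht : t ∈ F.image Finset.card) :
    ∃ A ∈ F, ∃ B ∈ F, A ≠ B ∧ A.card = t ∧ B.card = t := by
  have h2 : 1 < (F.filter (fun A => A.card = t)).card := lt_of_lt_of_le (by omega) (hmult t ht)
  obtain ⟨A, hA, B, hB, hAB⟩ := Finset.one_lt_card.1 h2
  rw [Finset.mem_filter] at hA hB
  exact ⟨A, hA.1, B, hB.1, hAB, hA.2, hB.2⟩

theorem upper_bound (hr : 2 ≤ r) (hn : 21 ≤ n)
    (F : Finset (Finset (Fin n)))
    (hanti : ∀ A ∈ F, ∀ B ∈ F, A ≠ B → ¬ A ⊆ B)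
    (hmult : ∀ t ∈ F.image Finset.card, r ≤ (F.filter (fun A => A.card = t)).card) :
    (F.image Finset.card).card ≤ n - 3 := by
  set S := F.image Finset.card with hS
  have hub : ∀ t ∈ S, t ≤ n := by
    intro t ht
    obtain ⟨A, _, rfl⟩ := Finset.mem_image.1 ht
    calc A.card ≤ Fintype.card (Fin n) := Finset.card_le_univ A
    _ = n := Fintype.card_fin n
  have h0 : 0 ∉ S := by
    intro h
    obtain ⟨A, _, B, _, hAB, hcA, hcB⟩ := two_at F hr hmult h
    rw [Finset.card_eq_zero] at hcA hcB
    exact hAB (hcA.trans hcB.symm)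
  have hN : n ∉ S := by
    intro h
    obtain ⟨A, _, B, _, hAB, hcA, hcB⟩ := two_at F hr hmult h
    have hA : A = Finset.univ := by
      rw [← Finset.card_eq_iff_eq_univ, Fintype.card_fin]; exact hcA
    have hB : B = Finset.univ := by
      rw [← Finset.card_eq_iff_eq_univ, Fintype.card_fin]; exact hcB
    exact hAB (hA.trans hB.symm)
  -- a singleton member forces its element off every other bigger member
  have hsingle : ∀ {A C : Finset (Fin n)} {a : Fin n}, A ∈ F → C ∈ F →
      A = {a} → C.card ≠ 1 → a ∉ C := by
    intro A C a hA hC hAa hcC ha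
    have hne : A ≠ C := by
      rintro rfl
      rw [hAa] at hcC
      simp at hcC
    exact hanti A hA C hC hne (by rw [hAa]; simpa using ha)
  have key1 : 1 ∈ S → (n-1) ∉ S := by
    intro h1 hn1
    obtain ⟨A, hA, B, hB, hAB, hcA, hcB⟩ := two_at F hr hmult h1
    obtain ⟨C, hC, _, _, _, hcC, _⟩ := two_at F hr hmult hn1
    obtain ⟨a, rfl⟩ := Finset.card_eq_one.1 hcA
    obtain ⟨b, rfl⟩ := Finset.card_eq_one.1 hcB
    have hab : a ≠ b := by
      intro h; exact hAB (by rw [h])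
    have hcompl : Cᶜ.card = 1 := by
      rw [Finset.card_compl, Fintype.card_fin, hcC]; omega
    obtain ⟨c, hc⟩ := Finset.card_eq_one.1 hcompl
    have ha := hsingle hA hC rfl (by omega)
    have hb := hsingle hB hC rfl (by omega)
    have ha' : a ∈ Cᶜ := Finset.mem_compl.2 ha
    have hb' : b ∈ Cᶜ := Finset.mem_compl.2 hb
    rw [hc, Finset.mem_singleton] at ha' hb'
    exact hab (ha'.trans hb'.symm)
  have key2 : 1 ∈ S → (n-2) ∉ S := by
    intro h1 hn2
    obtain ⟨A, hA, B, hB, hAB, hcA, hcB⟩ := two_at F hr hmult h1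
    obtain ⟨C, hC, C', hC', hCC', hcC, hcC'⟩ := two_at F hr hmult hn2
    obtain ⟨a, rfl⟩ := Finset.card_eq_one.1 hcA
    obtain ⟨b, rfl⟩ := Finset.card_eq_one.1 hcB
    have hab : a ≠ b := by
      intro h; exact hAB (by rw [h])
    have hcard2 : ({a, b} : Finset (Fin n)).card = 2 := by
      rw [Finset.card_insert_of_notMem (by simpa using hab), Finset.card_singleton]
    have hcardc : ({a, b}ᶜ : Finset (Fin n)).card = n - 2 := by
      rw [Finset.card_compl, Fintype.card_fin, hcard2]
    have hsub : ∀ {D : Finset (Fin n)}, D ∈ F → D.card = n-2 → D = {a, b}ᶜ := by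
      intro D hD hcD
      have haD := hsingle hA hD rfl (by omega)
      have hbD := hsingle hB hD rfl (by omega)
      apply Finset.eq_of_subset_of_card_le
      · intro x hx
        rw [Finset.mem_compl]
        intro hmem
        rcases Finset.mem_insert.1 hmem with h | h
        · exact haD (h ▸ hx)
        · rw [Finset.mem_singleton] at h
          exact hbD (h ▸ hx)
      · omega
    exact hCC' ((hsub hC hcC).trans (hsub hC' hcC').symm)
  have key3 : (n-1) ∈ S → 2 ∉ S := by
    intro hn1 h2
    obtain ⟨C, hC, C', hC', hCC', hcC, hcC'⟩ := two_at F hr hmult hn1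
    obtain ⟨P, hP, P', hP', hPP', hcP, hcP'⟩ := two_at F hr hmult h2
    have hcomplC : Cᶜ.card = 1 := by
      rw [Finset.card_compl, Fintype.card_fin, hcC]; omega
    have hcomplC' : C'ᶜ.card = 1 := by
      rw [Finset.card_compl, Fintype.card_fin, hcC']; omega
    obtain ⟨c, hc⟩ := Finset.card_eq_one.1 hcomplC
    obtain ⟨c', hc'⟩ := Finset.card_eq_one.1 hcomplC'
    have hcc' : c ≠ c' := by
      rintro rfl
      apply hCC'
      have : Cᶜ = C'ᶜ := hc.trans hc'.symm
      exact compl_injective this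
    have hPin : ∀ {Q : Finset (Fin n)}, Q ∈ F → Q.card = 2 → Q = {c, c'} := by
      intro Q hQ hcQ
      have hQC : c ∈ Q := by
        by_contra hcQ'
        have hQsub : Q ⊆ C := by
          intro x hx
          by_contra hxC
          have : x ∈ Cᶜ := Finset.mem_compl.2 hxC
          rw [hc, Finset.mem_singleton] at this
          exact hcQ' (this ▸ hx)
        exact hanti Q hQ C hC (by rintro rfl; omega) hQsub
      have hQC' : c' ∈ Q := by
        by_contra hcQ'
        have hQsub : Q ⊆ C' := by
          intro x hx
          by_contra hxC
          have : x ∈ C'ᶜ := Finset.mem_compl.2 hxC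
          rw [hc', Finset.mem_singleton] at this
          exact hcQ' (this ▸ hx)
        exact hanti Q hQ C' hC' (by rintro rfl; omega) hQsub
      have hsub2 : ({c, c'} : Finset (Fin n)) ⊆ Q := by
        intro x hx
        rcases Finset.mem_insert.1 hx with h | h
        · exact h ▸ hQC
        · rw [Finset.mem_singleton] at h
          exact h ▸ hQC'
      have hcard2 : ({c, c'} : Finset (Fin n)).card = 2 := by
        rw [Finset.card_insert_of_notMem (by simpa using hcc'), Finset.card_singleton]
      exact (Finset.eq_of_subset_of_card_le hsub2 (by omega)).symm
    exact hPP' ((hPin hP hcP).trans (hPin hP' hcP').symm)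
  by_cases h1 : 1 ∈ S
  · have hsub : S ⊆ Finset.Icc 1 (n-3) := by
      intro t ht
      rw [Finset.mem_Icc]
      have := hub t ht
      have ht0 : t ≠ 0 := fun h => h0 (h ▸ ht)
      have htn : t ≠ n := fun h => hN (h ▸ ht)
      have htn1 : t ≠ n-1 := fun h => key1 h1 (h ▸ ht)
      have htn2 : t ≠ n-2 := fun h => key2 h1 (h ▸ ht)
      omega
    calc S.card ≤ (Finset.Icc 1 (n-3)).card := Finset.card_le_card hsub
    _ = n - 3 := by rw [Nat.card_Icc]; omega
  · by_cases hn1 : (n-1) ∈ S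
    · have hsub : S ⊆ Finset.Icc 3 (n-1) := by
        intro t ht
        rw [Finset.mem_Icc]
        have := hub t ht
        have ht0 : t ≠ 0 := fun h => h0 (h ▸ ht)
        have ht1 : t ≠ 1 := fun h => h1 (h ▸ ht)
        have ht2 : t ≠ 2 := fun h => key3 hn1 (h ▸ ht)
        have htn : t ≠ n := fun h => hN (h ▸ ht)
        omega
      calc S.card ≤ (Finset.Icc 3 (n-1)).card := Finset.card_le_card hsub
      _ = n - 3 := by rw [Nat.card_Icc]; omega
    · have hsub : S ⊆ Finset.Icc 2 (n-2) := by
        intro t ht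
        rw [Finset.mem_Icc]
        have := hub t ht
        have ht0 : t ≠ 0 := fun h => h0 (h ▸ ht)
        have ht1 : t ≠ 1 := fun h => h1 (h ▸ ht)
        have htn : t ≠ n := fun h => hN (h ▸ ht)
        have htn1 : t ≠ n-1 := fun h => hn1 (h ▸ ht)
        omega
      calc S.card ≤ (Finset.Icc 2 (n-2)).card := Finset.card_le_card hsub
      _ = n - 3 := by rw [Nat.card_Icc]; omega

end Upper

namespace Final
open Stmt12 More Fam Glue Upper

lemma numeric_CB {r u : ℕ} (hr : 2 ≤ r)
    (hu : u = Nat.log 2 r + (Nat.log 2 (Nat.log 2 r))/2 + 4) :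
    r * r ≤ Nat.centralBinom u := by
  set a := Nat.log 2 r with ha
  set b := Nat.log 2 a with hb
  have ha1 : 1 ≤ a := Nat.le_log_of_pow_le (by norm_num) (by simpa using hr)
  have hba : b ≤ a := Nat.log_le_self 2 a
  have e1 : r < 2^(a+1) := Nat.lt_pow_succ_log_self (by norm_num) r
  have e2 : a < 2^(b+1) := Nat.lt_pow_succ_log_self (by norm_num) a
  have h4a : (4:ℕ)^a = 2^a * 2^a := by
    rw [show (4:ℕ) = 2*2 by norm_num, Nat.mul_pow]
  have f1 : r * r ≤ 4 * 4^a := by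
    have : r ≤ 2 * 2^a := by
      have : (2:ℕ)^(a+1) = 2 * 2^a := by ring
      omega
    calc r * r ≤ (2*2^a) * (2*2^a) := Nat.mul_le_mul this this
    _ = 4 * 4^a := by rw [h4a]; ring
  have h2b : (2:ℕ)^b ≤ 2 * 4^(b/2) := by
    have h4b : (4:ℕ)^(b/2) = 2^(2*(b/2)) := by
      rw [show (4:ℕ) = 2^2 by norm_num, ← Nat.pow_mul]
    rw [h4b]
    have hble : b ≤ 2*(b/2) + 1 := by omega
    calc (2:ℕ)^b ≤ 2^(2*(b/2)+1) := Nat.pow_le_pow_right (by norm_num) hble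
    _ = 2 * 2^(2*(b/2)) := by ring
  have f2 : u ≤ 64 * 4^(b/2) := by
    have h1 : a + 1 ≤ 2 * 2^b := by
      have : (2:ℕ)^(b+1) = 2 * 2^b := by ring
      omega
    have hu16 : u ≤ 16 * (a+1) := by omega
    calc u ≤ 16 * (a+1) := hu16
    _ ≤ 16 * (2 * 2^b) := by omega
    _ = 32 * 2^b := by ring
    _ ≤ 32 * (2 * 4^(b/2)) := by omega
    _ = 64 * 4^(b/2) := by ring
  have f3 : u * (r * r) ≤ 4^u := by
    calc u * (r*r) ≤ (64 * 4^(b/2)) * (4 * 4^a) :=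
          Nat.mul_le_mul f2 f1
    _ = 4^4 * (4^(b/2) * 4^a) := by ring
    _ = 4^4 * 4^(b/2 + a) := by rw [Nat.pow_add]
    _ = 4^(4 + (b/2 + a)) := by rw [← Nat.pow_add]
    _ = 4^u := by rw [hu]; ring_nf
  have hu4 : 4 ≤ u := by omega
  have f4 := Nat.four_pow_lt_mul_centralBinom u hu4
  have f5 : u * (r*r) ≤ u * Nat.centralBinom u := by omega
  exact Nat.le_of_mul_le_mul_left f5 (by omega)

lemma extract {r n : ℕ} (hr : 2 ≤ r)
    (hn : (n : ℝ) ≥ 2 * r + 2 * Real.logb 2 r + Real.logb 2 (Real.logb 2 r) + 15) :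
    n ≥ 2*r + 2*(Nat.log 2 r) + Nat.log 2 (Nat.log 2 r) + 15 := by
  set a := Nat.log 2 r with ha
  set b := Nat.log 2 a with hb
  have ha1 : 1 ≤ a := Nat.le_log_of_pow_le (by norm_num) (by simpa using hr)
  have key : ∀ m x : ℕ, x ≠ 0 → 2^m ≤ x → (m:ℝ) ≤ Real.logb 2 x := by
    intro m x hx hpow
    have h1 : ((2:ℝ))^m ≤ (x:ℝ) := by exact_mod_cast hpow
    have h2 : Real.logb 2 ((2:ℝ)^m) ≤ Real.logb 2 x :=
      Real.logb_le_logb_of_le (by norm_num) (by positivity) h1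
    rwa [Real.logb_pow, Real.logb_self_eq_one (by norm_num), mul_one] at h2
  have step1 : (a:ℝ) ≤ Real.logb 2 r :=
    key a r (by omega) (Nat.pow_log_le_self 2 (by omega))
  have step2 : (b:ℝ) ≤ Real.logb 2 (Real.logb 2 r) := by
    have s1 : (b:ℝ) ≤ Real.logb 2 a :=
      key b a (by omega) (Nat.pow_log_le_self 2 (by omega))
    have s2 : Real.logb 2 (a:ℝ) ≤ Real.logb 2 (Real.logb 2 r) := by
      apply Real.logb_le_logb_of_le (by norm_num : (1:ℝ) < 2)
      · exact_mod_cast ha1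
      · exact step1
    linarith
  have hfin : ((2*r + 2*a + b + 15 : ℕ) : ℝ) ≤ (n:ℝ) := by
    push_cast
    linarith
  exact_mod_cast hfin

end Final

theorem stmt_12 (r n : ℕ) (hr : 2 ≤ r)
    (hn : (n : ℝ) ≥ 2 * r + 2 * Real.logb 2 r + Real.logb 2 (Real.logb 2 r) + 15) :
    (∃ F : Finset (Finset (Fin n)),
      (∀ A ∈ F, ∀ B ∈ F, A ≠ B → ¬ A ⊆ B) ∧
      (∀ t ∈ F.image Finset.card,
        r ≤ (F.filter (fun A => A.card = t)).card) ∧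
      (F.image Finset.card).card = n - 3) ∧
    (∀ F : Finset (Finset (Fin n)),
      (∀ A ∈ F, ∀ B ∈ F, A ≠ B → ¬ A ⊆ B) →
      (∀ t ∈ F.image Finset.card,
        r ≤ (F.filter (fun A => A.card = t)).card) →
      (F.image Finset.card).card ≤ n - 3) := by
  have hnat := Final.extract hr hn
  set a := Nat.log 2 r with ha
  set b := Nat.log 2 a with hb
  have ha1 : 1 ≤ a := Nat.le_log_of_pow_le (by norm_num) (by simpa using hr)
  have hba : b ≤ a := Nat.log_le_self 2 a
  set u := a + b/2 + 4 with hu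
  set Γ := Nat.centralBinom u / r with hΓ
  have hu5 : 5 ≤ u := by omega
  have hCB : r * r ≤ Nat.centralBinom u := Final.numeric_CB hr (by rw [hu])
  have hσ : r + u + 4 ≤ (n+1)/2 := by omega
  have hn2 : 2*r + 2*u + 3 ≤ n := by omega
  have hn4 : 4 ≤ n := by omega
  have hn21 : 21 ≤ n := by omega
  constructor
  · exact Glue.exists_F hr hu5 hCB hΓ hσ hn2 hn4
  · intro F hanti hmult
    exact Upper.upper_bound hr hn21 F hanti hmult
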